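/- Let w₁ ≥ w₂ ≥ ... ≥ w_e be the edge weights of a finite directed graph G sorted in descending order, and let G_k denote the subgraph consisting of the k edges with the largest weights (the first k edges in the sorted order). If k* is the smallest index such that j is reachable from i in G_{k*}, then the total effect T(i,j) equals w_{k*}. -/

import Mathlib

open Classical

variable {V : Type*} [Fintype V]

/-- `p` is a directed path (nonempty list of consecutive edges) from `i` to `j`
in the graph with edge relation `E`. -/
def IsPath (E : V → V → Prop) (i j : V) (p : List (V × V)) : Prop :=
  p ≠ [] ∧ (∀ e ∈ p, E e.1 e.2) ∧
  p.head?.map Prod.fst = some i ∧ p.getLast?.map Prod.snd = some j ∧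
  p.Chain' (fun e f => e.2 = f.1)

/-- The indirect effect of a path: the minimum edge weight along it. -/
noncomputable def minW (w : V → V → ℝ) (p : List (V × V)) : ℝ :=
  sInf {x | ∃ e ∈ p, w e.1 e.2 = x}

/-- The total causal effect: the maximum over paths from `i` to `j`
of the minimum edge weight along the path. -/
noncomputable def Teff (E : V → V → Prop) (w : V → V → ℝ) (i j : V) : ℝ :=
  sSup {x | ∃ p, IsPath E i j p ∧ minW w p = x}

/-- `j` is reachable from `i`: some path exists. -/
def Reach (E : V → V → Prop) (i j : V) : Prop := ∃ p, IsPath E i j p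

lemma minW_set_eq (w : V → V → ℝ) (p : List (V × V)) :
    {x | ∃ e ∈ p, w e.1 e.2 = x} = {x | x ∈ p.map fun e => w e.1 e.2} := by
  ext x; simp [List.mem_map, eq_comm]

lemma minW_finite (w : V → V → ℝ) (p : List (V × V)) :
    {x | ∃ e ∈ p, w e.1 e.2 = x}.Finite := by
  rw [minW_set_eq]; exact (p.map fun e => w e.1 e.2).finite_toSet

lemma minW_mem (w : V → V → ℝ) {p : List (V × V)} (hp : p ≠ []) :
    ∃ e ∈ p, minW w p = w e.1 e.2 := by
  obtain ⟨e, he⟩ := List.exists_mem_of_ne_nil p hp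
  have hne : {x | ∃ e ∈ p, w e.1 e.2 = x}.Nonempty := ⟨w e.1 e.2, e, he, rfl⟩
  have := hne.csInf_mem (minW_finite w p)
  obtain ⟨f, hf, hfe⟩ := this
  exact ⟨f, hf, hfe.symm⟩

lemma minW_le (w : V → V → ℝ) {p : List (V × V)} {e : V × V} (he : e ∈ p) :
    minW w p ≤ w e.1 e.2 :=
  csInf_le (minW_finite w p).bddBelow ⟨e, he, rfl⟩

theorem stmt3 (E : V → V → Prop) (w : V → V → ℝ) (i j : V)
    (L : List (V × V)) (hL : ∀ a b, E a b ↔ (a, b) ∈ L) (hnd : L.Nodup)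
    (hsort : (L.map fun e => w e.1 e.2).Pairwise (· ≥ ·))
    (hreach : Reach E i j)
    (k : Fin L.length)
    (hk : Reach (fun a b => (a, b) ∈ L.take ((k : ℕ) + 1)) i j)
    (hmin : ∀ m ≤ (k : ℕ), ¬ Reach (fun a b => (a, b) ∈ L.take m) i j) :
    Teff E w i j = w (L.get k).1 (L.get k).2 := by
  set f : V × V → ℝ := fun e => w e.1 e.2 with hf
  set wk : ℝ := f (L.get k) with hwk
  -- monotonicity from sortedness
  have hmono : ∀ m n : ℕ, (hm : m < L.length) → (hn : n < L.length) → m ≤ n →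
      f (L[n]'hn) ≤ f (L[m]'hm) := by
    intro m n hm hn hmn
    rcases eq_or_lt_of_le hmn with rfl | hlt
    · exact le_refl _
    · have := (List.pairwise_iff_getElem.mp hsort) m n
        (by simp only [List.length_map]; exact hlt.trans hn)
        (by simp only [List.length_map]; exact hn) hlt
      simpa using this
  -- upper bound: every path in E has minW ≤ wk
  have hub : ∀ p, IsPath E i j p → minW w p ≤ wk := by
    intro p hp
    obtain ⟨hne, hE, h3, h4, h5⟩ := hp
    by_cases hall : ∀ e ∈ p, e ∈ L.take (k : ℕ)
    · exact absurd ⟨p, hne, fun e he => by simpa using hall e he, h3, h4, h5⟩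
        (hmin k le_rfl)
    · push_neg at hall
      obtain ⟨e, hep, hnt⟩ := hall
      have heL : e ∈ L := by
        have := (hL e.1 e.2).mp (hE e hep); simpa using this
      have hed : e ∈ L.drop (k : ℕ) := by
        have heL' : e ∈ L.take (k : ℕ) ++ L.drop (k : ℕ) := by
          rw [List.take_append_drop]; exact heL
        rcases List.mem_append.mp heL' with h | h
        · exact absurd h hnt
        · exact h
      obtain ⟨t, ht, hte⟩ := List.getElem_of_mem hed
      rw [List.getElem_drop] at hte
      have hlt : (k : ℕ) + t < L.length := by
        have := ht; simp [List.length_drop] at this; omega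
      have hwle : f e ≤ wk := by
        rw [← hte]
        exact hmono (k : ℕ) ((k : ℕ) + t) k.isLt hlt (by omega)
      exact le_trans (minW_le w hep) hwle
  -- the witness path
  obtain ⟨q, hq1, hq2, hq3, hq4, hq5⟩ := hk
  have hqE : IsPath E i j q := by
    refine ⟨hq1, fun e he => ?_, hq3, hq4, hq5⟩
    have : (e.1, e.2) ∈ L.take ((k : ℕ) + 1) := hq2 e he
    exact (hL e.1 e.2).mpr (List.mem_of_mem_take this)
  have hqge : wk ≤ minW w q := by
    obtain ⟨e, he, heq⟩ := minW_mem w hq1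
    have het : e ∈ L.take ((k : ℕ) + 1) := by simpa using hq2 e he
    obtain ⟨t, ht, hte⟩ := List.getElem_of_mem het
    have htlen : t < L.length := by
      simp [List.length_take] at ht; omega
    rw [List.getElem_take] at hte
    have htk : t ≤ (k : ℕ) := by
      simp [List.length_take] at ht; omega
    have : wk ≤ f e := by
      rw [← hte]; exact hmono t (k : ℕ) htlen k.isLt htk
    rw [heq]; exact this
  have hqeq : minW w q = wk := le_antisymm (hub q hqE) hqge
  -- compute Teff
  have hSne : {x | ∃ p, IsPath E i j p ∧ minW w p = x}.Nonempty :=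
    ⟨minW w q, q, hqE, rfl⟩
  have hbdd : ∀ x ∈ {x | ∃ p, IsPath E i j p ∧ minW w p = x}, x ≤ wk := by
    rintro x ⟨p, hp, rfl⟩; exact hub p hp
  refine le_antisymm (csSup_le hSne hbdd) ?_
  exact le_csSup ⟨wk, hbdd⟩ ⟨q, hqE, hqeq⟩
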